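/- Let 0 ≤ e < 1, define k(f) = 1 + e·cos f, fix f₀ ∈ ℝ, let J : ℝ → ℝ be differentiable with J'(f) = 1/k(f)² and J(f₀) = 0, set φ₁(f) = k(f)·sin f and φ₂(f) = 3e²·k(f)·J(f)·sin f + k(f)·cos f − 2e, and let R : ℝ → ℝ be continuous. Define φ_p(f) = φ₁(f)·∫_{f₀}^{f} φ₂(τ)·R(τ)/(1−e²) dτ − φ₂(f)·∫_{f₀}^{f} φ₁(τ)·R(τ)/(1−e²) dτ. Then φ_p is twice differentiable with φ_p''(f) + (4 − 3/k(f))·φ_p(f) = R(f) for all f, and φ_p(f₀) = 0 and φ_p'(f₀) = 0. -/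

import Mathlib

/-- Variation of parameters for the inhomogeneous decoupled radial equation
`x'' + (4 − 3/k)·x = R(f)`: with fundamental solutions `φ₁ = k·sin f` and
`φ₂ = 3e²·k·J·sin f + k·cos f − 2e` (Wronskian `1 − e²`), the function
`φ_p = φ₁·∫_{f₀}^f φ₂R/(1−e²) − φ₂·∫_{f₀}^f φ₁R/(1−e²)` is a particular solution
with zero initial conditions at `f₀`. -/
theorem stmt_7 (e : ℝ) (he0 : 0 ≤ e) (he1 : e < 1)
    (k : ℝ → ℝ) (hk : ∀ f, k f = 1 + e * Real.cos f)
    (f₀ : ℝ) (J : ℝ → ℝ) (hJ : Differentiable ℝ J)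
    (hJ' : ∀ f, deriv J f = 1 / (k f) ^ 2) (hJ0 : J f₀ = 0)
    (φ₁ φ₂ : ℝ → ℝ) (hφ₁ : ∀ f, φ₁ f = k f * Real.sin f)
    (hφ₂ : ∀ f, φ₂ f = 3 * e ^ 2 * k f * J f * Real.sin f + k f * Real.cos f - 2 * e)
    (R : ℝ → ℝ) (hR : Continuous R)
    (φp : ℝ → ℝ)
    (hφp : ∀ f, φp f = φ₁ f * (∫ τ in f₀..f, φ₂ τ * R τ / (1 - e ^ 2))
      - φ₂ f * (∫ τ in f₀..f, φ₁ τ * R τ / (1 - e ^ 2))) :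
    Differentiable ℝ φp ∧ Differentiable ℝ (deriv φp) ∧
      (∀ f, deriv (deriv φp) f + (4 - 3 / k f) * φp f = R f) ∧
      φp f₀ = 0 ∧ deriv φp f₀ = 0 := by
  -- basic positivity
  have hkpos : ∀ f, 0 < k f := by
    intro f; rw [hk]; nlinarith [Real.neg_one_le_cos f]
  have hkne : ∀ f, k f ≠ 0 := fun f => (hkpos f).ne'
  have he2 : (1 : ℝ) - e ^ 2 ≠ 0 := by nlinarith
  -- function equalities
  have hkfun : k = fun f => 1 + e * Real.cos f := funext hk
  have hφ₁fun : φ₁ = fun f => k f * Real.sin f := funext hφ₁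
  have hφ₂fun : φ₂ = fun f =>
      3 * e ^ 2 * k f * J f * Real.sin f + k f * Real.cos f - 2 * e := funext hφ₂
  -- derivative of k
  have hkd : ∀ f, HasDerivAt k (-(e * Real.sin f)) f := by
    intro f
    rw [hkfun]
    have h := ((Real.hasDerivAt_cos f).const_mul e).const_add 1
    refine h.congr_deriv ?_; ring
  have hJd : ∀ f, HasDerivAt J (1 / (k f) ^ 2) f := by
    intro f; rw [← hJ' f]; exact (hJ f).hasDerivAt
  -- abbreviations for derivatives
  set D1 : ℝ → ℝ := fun f => -(e * Real.sin f) * Real.sin f + k f * Real.cos f with hD1def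
  set D2 : ℝ → ℝ := fun f => 3 * e ^ 2 *
      (-(e * Real.sin f ^ 2 * J f) + Real.sin f / k f + k f * Real.cos f * J f)
      - e * Real.sin f * Real.cos f - k f * Real.sin f with hD2def
  set DD1 : ℝ → ℝ := fun f => -(k f * Real.sin f) - 3 * e * Real.sin f * Real.cos f with hDD1def
  set DD2 : ℝ → ℝ := fun f => 3 * e ^ 2 *
      (J f * (-(3 * e * Real.sin f * Real.cos f) - k f * Real.sin f) + 2 * Real.cos f / k f)
      - e * Real.cos f ^ 2 + 2 * e * Real.sin f ^ 2 - k f * Real.cos f with hDD2def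
  -- first derivatives of the fundamental solutions
  have h1 : ∀ f, HasDerivAt φ₁ (D1 f) f := by
    intro f
    rw [hφ₁fun]
    exact (hkd f).mul (Real.hasDerivAt_sin f)
  have h2 : ∀ f, HasDerivAt φ₂ (D2 f) f := by
    intro f
    rw [hφ₂fun]
    have h := (((((hkd f).const_mul (3 * e ^ 2)).mul (hJd f)).mul
      (Real.hasDerivAt_sin f)).add ((hkd f).mul (Real.hasDerivAt_cos f))).sub_const (2 * e)
    refine h.congr_deriv ?_
    simp only [hD2def, Pi.mul_apply]
    field_simp [hkne f]
    ring
  -- second derivatives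
  have hdd1 : ∀ f, HasDerivAt D1 (DD1 f) f := by
    intro f
    have h := ((((Real.hasDerivAt_sin f).const_mul e).neg).mul (Real.hasDerivAt_sin f)).add
      ((hkd f).mul (Real.hasDerivAt_cos f))
    refine h.congr_deriv ?_
    simp only [hDD1def, hk, Pi.neg_apply]
    ring
  have hdd2 : ∀ f, HasDerivAt D2 (DD2 f) f := by
    intro f
    have p1 := (((Real.hasDerivAt_sin f).pow 2).const_mul e).mul (hJd f)
    have p2 := (Real.hasDerivAt_sin f).div (hkd f) (hkne f)
    have p3 := ((hkd f).mul (Real.hasDerivAt_cos f)).mul (hJd f)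
    have p4 := ((Real.hasDerivAt_sin f).const_mul e).mul (Real.hasDerivAt_cos f)
    have p5 := (hkd f).mul (Real.hasDerivAt_sin f)
    have h := ((((p1.neg.add p2).add p3).const_mul (3 * e ^ 2)).sub p4).sub p5
    refine h.congr_deriv ?_
    simp only [hDD2def, Pi.mul_apply, Pi.pow_apply]
    field_simp [hkne f]
    ring
  -- homogeneous equations
  have hhom1 : ∀ f, DD1 f = -((4 - 3 / k f) * φ₁ f) := by
    intro f
    simp only [hDD1def, hφ₁, hk]
    have hne : 1 + e * Real.cos f ≠ 0 := by rw [← hk]; exact hkne f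
    field_simp [hkne f]
    ring
  have hhom2 : ∀ f, DD2 f = -((4 - 3 / k f) * φ₂ f) := by
    intro f
    simp only [hDD2def, hφ₂, hk]
    have hne : 1 + e * Real.cos f ≠ 0 := by rw [← hk]; exact hkne f
    have hsc := Real.sin_sq_add_cos_sq f
    field_simp [hkne f]
    linear_combination (2 * e * (1 + e * Real.cos f)) * hsc
  -- Wronskian
  have hw : ∀ f, D1 f * φ₂ f - D2 f * φ₁ f = 1 - e ^ 2 := by
    intro f
    simp only [hD1def, hD2def, hφ₁, hφ₂, hk]
    have hne : 1 + e * Real.cos f ≠ 0 := by rw [← hk]; exact hkne f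
    have hsc := Real.sin_sq_add_cos_sq f
    field_simp [hkne f]
    linear_combination (-(e ^ 2) * (1 + e * Real.cos f) + (1 + e * Real.cos f) ^ 3
      + (-e * Real.cos f - 2 * e ^ 2 * Real.cos f ^ 2 + e ^ 3 * Real.cos f - e ^ 3 * Real.cos f ^ 3)) * hsc
  -- continuity of the integrands
  have hkc : Continuous k := by rw [hkfun]; fun_prop
  have hc1 : Continuous fun τ => φ₁ τ * R τ / (1 - e ^ 2) := by
    rw [hφ₁fun]; fun_prop
  have hc2 : Continuous fun τ => φ₂ τ * R τ / (1 - e ^ 2) := by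
    rw [hφ₂fun]
    have := hJ.continuous
    fun_prop
  -- integral functions and their derivatives
  set I1 : ℝ → ℝ := fun x => ∫ τ in f₀..x, φ₁ τ * R τ / (1 - e ^ 2) with hI1def
  set I2 : ℝ → ℝ := fun x => ∫ τ in f₀..x, φ₂ τ * R τ / (1 - e ^ 2) with hI2def
  have hI1 : ∀ x, HasDerivAt I1 (φ₁ x * R x / (1 - e ^ 2)) x := fun x =>
    (hc1.integral_hasStrictDerivAt f₀ x).hasDerivAt
  have hI2 : ∀ x, HasDerivAt I2 (φ₂ x * R x / (1 - e ^ 2)) x := fun x =>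
    (hc2.integral_hasStrictDerivAt f₀ x).hasDerivAt
  have hφpfun : φp = fun f => φ₁ f * I2 f - φ₂ f * I1 f := funext hφp
  -- first derivative of φp
  have hP : ∀ f, HasDerivAt φp (D1 f * I2 f - D2 f * I1 f) f := by
    intro f
    rw [hφpfun]
    have h := ((h1 f).mul (hI2 f)).sub ((h2 f).mul (hI1 f))
    refine h.congr_deriv ?_
    ring
  have hderiv : deriv φp = fun f => D1 f * I2 f - D2 f * I1 f :=
    funext fun f => (hP f).deriv
  have hdiff : Differentiable ℝ φp := fun f => (hP f).differentiableAt
  -- second derivative of φp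
  have hP2 : ∀ f, HasDerivAt (deriv φp) (DD1 f * I2 f - DD2 f * I1 f + R f) f := by
    intro f
    rw [hderiv]
    have h := ((hdd1 f).mul (hI2 f)).sub ((hdd2 f).mul (hI1 f))
    refine h.congr_deriv ?_
    have key : D1 f * (φ₂ f * R f / (1 - e ^ 2)) - D2 f * (φ₁ f * R f / (1 - e ^ 2)) = R f := by
      rw [show D1 f * (φ₂ f * R f / (1 - e ^ 2)) - D2 f * (φ₁ f * R f / (1 - e ^ 2))
          = (D1 f * φ₂ f - D2 f * φ₁ f) * (R f / (1 - e ^ 2)) from by ring, hw f]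
      field_simp
    linarith [key]
  have hdiff2 : Differentiable ℝ (deriv φp) := fun f => (hP2 f).differentiableAt
  refine ⟨hdiff, hdiff2, ?_, ?_, ?_⟩
  · intro f
    rw [(hP2 f).deriv, hφp f]
    have := hhom1 f
    have := hhom2 f
    show DD1 f * I2 f - DD2 f * I1 f + R f + (4 - 3 / k f) * (φ₁ f * I2 f - φ₂ f * I1 f) = R f
    rw [hhom1 f, hhom2 f]
    ring
  · rw [hφp f₀]
    simp [intervalIntegral.integral_same]
  · rw [hderiv]
    show D1 f₀ * I2 f₀ - D2 f₀ * I1 f₀ = 0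
    simp [hI1def, hI2def, intervalIntegral.integral_same]
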